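/- Let n ≥ 1, let ℓ > 0, c > 0, and let F = diag(f₁, …, fₙ) be a real diagonal matrix with fᵢ > 0 for all i. Then the kernel of A₀ (as a linear map on ℝ^{3n+2}) has dimension exactly n; that is, the eigenvalue 0 of A₀ has geometric multiplicity n. -/

import Mathlib

open Matrix Polynomial

noncomputable section

/-- The `n × n` tridiagonal matrix `B` of the Marx generator. -/
def marxB (n : ℕ) : Matrix (Fin n) (Fin n) ℝ :=
  Matrix.of fun i j =>
    if i = j then (if (i : ℕ) = n - 1 then ((n : ℝ) + 1) / n else 2)
    else if (i : ℕ) + 1 = (j : ℕ) ∨ (j : ℕ) + 1 = (i : ℕ) then -1 else 0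

/-- The `n × (n+1)` difference matrix `Σ`. -/
def marxSigma (n : ℕ) : Matrix (Fin n) (Fin (n + 1)) ℝ :=
  Matrix.of fun i j =>
    if (j : ℕ) = (i : ℕ) then 1 else if (j : ℕ) = (i : ℕ) + 1 then -1 else 0

/-- `J_{n+1} = diag(1, …, 1, n)`. -/
def marxJ (n : ℕ) : Matrix (Fin (n + 1)) (Fin (n + 1)) ℝ :=
  Matrix.diagonal fun j => if (j : ℕ) = n then (n : ℝ) else 1

/-- `J_{-1} = diag(1, …, 1, -1)` of size `n+1`. -/
def marxJm (n : ℕ) : Matrix (Fin (n + 1)) (Fin (n + 1)) ℝ :=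
  Matrix.diagonal fun j => if (j : ℕ) = n then (-1 : ℝ) else 1

/-- The `(3n+2) × (3n+2)` state transition matrix `A₀` of the Marx circuit,
indexed by `(Fin n ⊕ Fin (n+1)) ⊕ Fin (n+1)`, the `2n+1` voltages followed by
the `n+1` currents. -/
def marxA0 (n : ℕ) (ℓ c : ℝ) (f : Fin n → ℝ) :
    Matrix ((Fin n ⊕ Fin (n + 1)) ⊕ Fin (n + 1))
      ((Fin n ⊕ Fin (n + 1)) ⊕ Fin (n + 1)) ℝ :=
  Matrix.fromBlocks 0
    (Matrix.fromRows (-(1 / c) • (Matrix.diagonal f * marxSigma n * marxJm n))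
      ((1 / c) • (1 : Matrix (Fin (n + 1)) (Fin (n + 1)) ℝ)))
    (Matrix.fromCols ((1 / ℓ) • ((marxJ n)⁻¹ * marxJm n * (marxSigma n)ᵀ))
      (-(1 / ℓ) • (1 : Matrix (Fin (n + 1)) (Fin (n + 1)) ℝ)))
    0


/-- the kernel of `A₀` (as a linear map on `ℝ^{3n+2}`) has
dimension exactly `n`, i.e. the eigenvalue `0` of `A₀` has geometric
multiplicity `n`. -/
theorem statement7 (n : ℕ) (hn : 1 ≤ n) (ℓ c : ℝ) (hℓ : 0 < ℓ) (hc : 0 < c)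
    (f : Fin n → ℝ) (hf : ∀ i, 0 < f i) :
    Module.finrank ℝ (LinearMap.ker (marxA0 n ℓ c f).mulVecLin) = n := by
  classical
  set M := (marxJ n)⁻¹ * marxJm n * (marxSigma n)ᵀ with hM
  let φ : (Fin n → ℝ) →ₗ[ℝ] ((Fin n ⊕ Fin (n + 1)) ⊕ Fin (n + 1) → ℝ) :=
    { toFun := fun v => Sum.elim (Sum.elim v (M *ᵥ v)) 0
      map_add' := by
        intro v w
        funext x
        rcases x with (i | i) | i <;> simp [Matrix.mulVec_add]
      map_smul' := by
        intro a v
        funext x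
        rcases x with (i | i) | i <;> simp [Matrix.mulVec_smul] }
  have hker : LinearMap.ker (marxA0 n ℓ c f).mulVecLin = LinearMap.range φ := by
    ext x
    simp only [LinearMap.mem_ker, Matrix.mulVecLin_apply, LinearMap.mem_range]
    constructor
    · intro hx
      set a : Fin n → ℝ := fun i => x (Sum.inl (Sum.inl i)) with ha
      set b : Fin (n + 1) → ℝ := fun i => x (Sum.inl (Sum.inr i)) with hb
      set d : Fin (n + 1) → ℝ := fun i => x (Sum.inr i) with hd
      have hxeq : x = Sum.elim (Sum.elim a b) d := by
        funext y; rcases y with (i | i) | i <;> rfl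
      rw [hxeq, marxA0, Matrix.fromBlocks_mulVec] at hx
      have hcomp1 : (Sum.elim (Sum.elim a b) d ∘ Sum.inl) = Sum.elim a b := rfl
      have hcomp2 : (Sum.elim (Sum.elim a b) d ∘ Sum.inr) = d := rfl
      rw [hcomp1, hcomp2] at hx
      have htop := congrArg (fun g => g ∘ Sum.inl) hx
      have hbot := congrArg (fun g => g ∘ Sum.inr) hx
      simp only [Sum.elim_comp_inl, Sum.elim_comp_inr] at htop hbot
      -- top block: d = 0
      have hd0 : d = 0 := by
        have h1 : Matrix.fromRows (-(1 / c) • (Matrix.diagonal f * marxSigma n * marxJm n))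
            ((1 / c) • (1 : Matrix (Fin (n + 1)) (Fin (n + 1)) ℝ)) *ᵥ d = 0 := by
          have := htop
          simpa [Matrix.zero_mulVec] using this
        have h2 : ((1 / c) • (1 : Matrix (Fin (n + 1)) (Fin (n + 1)) ℝ)) *ᵥ d = 0 := by
          funext i
          have := congrFun h1 (Sum.inr i)
          simpa [Matrix.fromRows_mulVec] using this
        funext i
        have := congrFun h2 i
        simp only [Matrix.smul_mulVec, Matrix.one_mulVec, Pi.smul_apply,
          smul_eq_mul, Pi.zero_apply] at this
        have hcne : (1 / c) ≠ 0 := by positivity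
        exact (mul_eq_zero.mp this).resolve_left hcne
      -- bottom block: b = M *ᵥ a
      have hbM : b = M *ᵥ a := by
        have h1 : Matrix.fromCols ((1 / ℓ) • M)
            (-(1 / ℓ) • (1 : Matrix (Fin (n + 1)) (Fin (n + 1)) ℝ)) *ᵥ Sum.elim a b = 0 := by
          simpa [Matrix.zero_mulVec] using hbot
        rw [Matrix.fromCols_mulVec_sumElim] at h1
        funext i
        have := congrFun h1 i
        simp only [neg_smul, Matrix.neg_mulVec, Matrix.smul_mulVec, Matrix.one_mulVec,
          Pi.add_apply, Pi.smul_apply, smul_eq_mul, Pi.zero_apply, Pi.neg_apply, neg_mul] at this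
        have hlne : (1 / ℓ) ≠ 0 := by positivity
        have : (1 / ℓ) * (M *ᵥ a) i = (1 / ℓ) * b i := by linarith
        exact (mul_left_cancel₀ hlne this).symm
      refine ⟨a, ?_⟩
      rw [hxeq, hd0, hbM]
      rfl
    · rintro ⟨v, rfl⟩
      show marxA0 n ℓ c f *ᵥ Sum.elim (Sum.elim v (M *ᵥ v)) 0 = 0
      rw [marxA0, Matrix.fromBlocks_mulVec]
      have hcomp1 : (Sum.elim (Sum.elim v (M *ᵥ v)) (0 : Fin (n+1) → ℝ) ∘ Sum.inl) = Sum.elim v (M *ᵥ v) := rfl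
      have hcomp2 : (Sum.elim (Sum.elim v (M *ᵥ v)) (0 : Fin (n+1) → ℝ) ∘ Sum.inr) = 0 := rfl
      rw [hcomp1, hcomp2]
      funext y
      rcases y with y | y
      · simp [Matrix.zero_mulVec, Matrix.mulVec_zero]
      · simp [Matrix.zero_mulVec, Matrix.mulVec_zero, Matrix.fromCols_mulVec_sumElim,
          Matrix.neg_mulVec, Matrix.smul_mulVec, ← hM]
  have hinj : Function.Injective φ := by
    intro v w h
    funext i
    exact congrFun h (Sum.inl (Sum.inl i))
  rw [hker, LinearMap.finrank_range_of_inj hinj, Module.finrank_fin_fun]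


end
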